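/- arXiv:2501.16179 — 2 statements merged into one kernel-verified Lean document; each statement's English description precedes it below -/
import Mathlib

section
/- Fix ε ∈ (0, 1/2) and n ≥ 2. In cylindrical coordinate on ℝ^n with x = (x', x_{n-1}, x_n), r = √(x_{n-1}² + x_n²), θ = θ(x_{n-1}, x_n) ∈ [0, π] for x_n ≥ 0, the function h(x) = r^{1/2-ε} cos(((1-ε)/2)θ) satisfies: (a) -Δh = (ε/2 - 3ε²/4) r^{-3/2-ε} cos(((1-ε)/2)θ) in the upper half ball B_1⁺; (b) h = r^{1/2-ε} sin(επ/2) ≥ 0 on F = {x ∈ B_1 : x_n = 0, x_{n-1} ≤ 0}; (c) ∂h/∂θ = 0 on Γ_N = {x ∈ B_1 : x_n = 0, x_{n-1} > 0}; and (d) r^{1/2-ε} sin(επ/2) ≤ h(x) ≤ r^{1/2-ε} for θ ∈ [0, π]. Furthermore ε/2 - 3ε²/4 > 0 for any ε ∈ (0, 1/2). -/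
open Real Set

noncomputable section

lemma deriv_rpow_mul (a c r : ℝ) (hr : 0 < r) :
    deriv (fun s : ℝ => s ^ a * c) r = a * r ^ (a-1) * c := by
  have h := ((Real.hasDerivAt_rpow_const (p := a) (Or.inl hr.ne')).mul_const c).deriv
  simpa [mul_comm, mul_assoc, mul_left_comm] using h

lemma iter2_rpow_mul (a c r : ℝ) (hr : 0 < r) :
    iteratedDeriv 2 (fun s : ℝ => s ^ a * c) r = a * (a-1) * r ^ (a-2) * c := by
  rw [show (2:ℕ) = 1 + 1 from rfl, iteratedDeriv_succ, iteratedDeriv_one]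
  have hev : deriv (fun s : ℝ => s ^ a * c) =ᶠ[nhds r] fun s => a * s ^ (a-1) * c := by
    filter_upwards [eventually_gt_nhds hr] with s hs
    exact deriv_rpow_mul a c s hs
  rw [hev.deriv_eq]
  have h2 : HasDerivAt (fun s : ℝ => a * s ^ (a-1) * c) (a * ((a-1) * r^(a-1-1)) * c) r := by
    exact ((Real.hasDerivAt_rpow_const (p := a-1) (Or.inl hr.ne')).const_mul a).mul_const c
  rw [h2.deriv]
  ring_nf

lemma cos_hasDerivAt (K b t : ℝ) :
    HasDerivAt (fun t : ℝ => K * Real.cos (b * t)) (-(K * b * Real.sin (b * t))) t := by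
  have h1 : HasDerivAt (fun t : ℝ => b * t) b t := by
    simpa using (hasDerivAt_id t).const_mul b
  have h3 := h1.cos.const_mul K
  exact h3.congr_deriv (by ring)

lemma iter2_cos (K b θ : ℝ) :
    iteratedDeriv 2 (fun t : ℝ => K * Real.cos (b * t)) θ = -(K * b^2 * Real.cos (b * θ)) := by
  rw [show (2:ℕ) = 1 + 1 from rfl, iteratedDeriv_succ, iteratedDeriv_one]
  have hd : deriv (fun t : ℝ => K * Real.cos (b * t)) = fun t => -(K*b) * Real.sin (b * t) := by
    funext t
    rw [(cos_hasDerivAt K b t).deriv]; ring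
  rw [hd]
  have h1 : HasDerivAt (fun t : ℝ => b * t) b θ := by
    simpa using (hasDerivAt_id θ).const_mul b
  have h2 := h1.sin.const_mul (-(K*b))
  rw [h2.deriv]; ring


/-- properties of the barrier `h(x) = r^{1/2-ε} cos(((1-ε)/2)θ)` in the
cylindrical coordinates `(x', r, θ)` on `ℝⁿ` (`n ≥ 2`), where `θ ∈ [0, π]` parametrizes
the upper half `x_n ≥ 0`.  Since `h` depends only on `(r, θ)`, we express the Laplacian
by `Δ = ∂_{rr} + (1/r)∂_r + (1/r²)∂_{θθ}`:
(a) `-Δh = (ε/2 - 3ε²/4) r^{-3/2-ε} cos(((1-ε)/2)θ)` in the upper half ball;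
(b) on `F` (i.e. `θ = π`), `h = r^{1/2-ε} sin(επ/2) ≥ 0`;
(c) on `Γ_N` (i.e. `θ = 0`), `∂h/∂θ = 0`;
(d) `r^{1/2-ε} sin(επ/2) ≤ h ≤ r^{1/2-ε}` for `θ ∈ [0, π]`;
and `ε/2 - 3ε²/4 > 0` for every `ε ∈ (0, 1/2)`. -/
theorem barrier_properties (n : ℕ) (hn : 2 ≤ n) (ε : ℝ) (hε : ε ∈ Set.Ioo (0:ℝ) (1/2)) :
    (∀ r ∈ Set.Ioo (0:ℝ) 1, ∀ θ ∈ Set.Ioo (0:ℝ) Real.pi,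
      -(iteratedDeriv 2 (fun s : ℝ => s ^ ((1:ℝ)/2 - ε) * Real.cos ((1 - ε)/2 * θ)) r
          + (1/r) * deriv (fun s : ℝ => s ^ ((1:ℝ)/2 - ε) * Real.cos ((1 - ε)/2 * θ)) r
          + (1/r^2) *
            iteratedDeriv 2 (fun t : ℝ => r ^ ((1:ℝ)/2 - ε) * Real.cos ((1 - ε)/2 * t)) θ)
        = (ε/2 - 3*ε^2/4) * r ^ (-(3:ℝ)/2 - ε) * Real.cos ((1 - ε)/2 * θ)) ∧
    (∀ r ∈ Set.Icc (0:ℝ) 1,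
      r ^ ((1:ℝ)/2 - ε) * Real.cos ((1 - ε)/2 * Real.pi)
          = r ^ ((1:ℝ)/2 - ε) * Real.sin (ε * Real.pi / 2) ∧
        0 ≤ r ^ ((1:ℝ)/2 - ε) * Real.cos ((1 - ε)/2 * Real.pi)) ∧
    (∀ r ∈ Set.Ioo (0:ℝ) 1,
      deriv (fun t : ℝ => r ^ ((1:ℝ)/2 - ε) * Real.cos ((1 - ε)/2 * t)) 0 = 0) ∧
    (∀ r ∈ Set.Icc (0:ℝ) 1, ∀ θ ∈ Set.Icc (0:ℝ) Real.pi,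
      r ^ ((1:ℝ)/2 - ε) * Real.sin (ε * Real.pi / 2)
          ≤ r ^ ((1:ℝ)/2 - ε) * Real.cos ((1 - ε)/2 * θ) ∧
        r ^ ((1:ℝ)/2 - ε) * Real.cos ((1 - ε)/2 * θ) ≤ r ^ ((1:ℝ)/2 - ε)) ∧
    0 < ε/2 - 3*ε^2/4 := by
  obtain ⟨hε0, hε12⟩ := hε
  have hcoseq : Real.cos ((1 - ε)/2 * Real.pi) = Real.sin (ε * Real.pi / 2) := by
    rw [show (1 - ε)/2 * Real.pi = Real.pi/2 - ε * Real.pi / 2 by ring,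
      Real.cos_pi_div_two_sub]
  refine ⟨?_, ?_, ?_, ?_, by nlinarith⟩
  · intro r hr θ hθ
    set a : ℝ := (1:ℝ)/2 - ε with ha
    set b : ℝ := (1 - ε)/2 with hb
    have hr0 : 0 < r := hr.1
    rw [iter2_rpow_mul a _ r hr0, deriv_rpow_mul a _ r hr0, iter2_cos _ b θ]
    have e1 : r ^ (a-1) = r ^ (a-2) * r := by
      rw [show a-1 = (a-2)+1 by ring, Real.rpow_add hr0, Real.rpow_one]
    have e2 : r ^ a = r ^ (a-2) * r ^ (2:ℕ) := by
      rw [show a = (a-2)+((2:ℕ):ℝ) by push_cast; ring, Real.rpow_add hr0,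
        Real.rpow_natCast]
      norm_num
    have e3 : r ^ (-(3:ℝ)/2 - ε) = r ^ (a-2) := by
      congr 1; rw [ha]; ring
    rw [e1, e2, e3]
    have hrne : r ≠ 0 := hr0.ne'
    field_simp
    ring
  · intro r hr
    refine ⟨by rw [hcoseq], ?_⟩
    rw [hcoseq]
    apply mul_nonneg (Real.rpow_nonneg hr.1 _)
    apply Real.sin_nonneg_of_nonneg_of_le_pi
    · positivity
    · nlinarith [Real.pi_pos]
  · intro r hr
    rw [(cos_hasDerivAt (r ^ ((1:ℝ)/2 - ε)) ((1 - ε)/2) 0).deriv]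
    simp
  · intro r hr θ hθ
    have hra : (0:ℝ) ≤ r ^ ((1:ℝ)/2 - ε) := Real.rpow_nonneg hr.1 _
    have hπ := Real.pi_pos
    constructor
    · rw [← hcoseq]
      apply mul_le_mul_of_nonneg_left _ hra
      apply Real.cos_le_cos_of_nonneg_of_le_pi
      · nlinarith [hθ.1]
      · nlinarith
      · nlinarith [hθ.2]
    · calc r ^ ((1:ℝ)/2 - ε) * Real.cos ((1 - ε)/2 * θ) ≤ r ^ ((1:ℝ)/2 - ε) * 1 :=
            mul_le_mul_of_nonneg_left (Real.cos_le_one _) hra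
        _ = _ := mul_one _
end
end

section
/- (Classification of homogeneous blowups in 2D) Let κ > 0 and suppose u_0 : ℝ² → ℝ is continuous, homogeneous of degree κ, symmetric with respect to {x_2 = 0}, harmonic in the open upper and lower half-planes, and satisfies: u_0 ≥ 0 and ∂_ν u_0 ≥ 0 with u_0 · ∂_ν u_0 = 0 on the half-line {(x_1, 0) : x_1 < 0}, and ∂_ν u_0 = 0 on {(x_1, 0) : x_1 > 0} (ν the upward normal from below). If u_0 is not identically zero, then in polar coordinates u_0(r, θ) = b r^κ cos(κθ) for some b ≠ 0, and either κ ∈ {2m, 2m + 3/2 : m ∈ ℕ₀} with b > 0, or κ ∈ {2m + 1, 2m + 1/2 : m ∈ ℕ₀} with b < 0. In particular κ ∈ ½ℕ. -/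
open Real

noncomputable section

/-- Pointwise Laplacian of a function on ℝ² ≅ ℂ. -/
def lap2 (u : ℂ → ℝ) (z : ℂ) : ℝ :=
  iteratedDeriv 2 (fun t : ℝ => u (z + t)) 0
    + iteratedDeriv 2 (fun t : ℝ => u (z + t * Complex.I)) 0

/-- Harmonic on an open set `s`: `C²` with vanishing Laplacian. -/
def HarmonicOn2 (u : ℂ → ℝ) (s : Set ℂ) : Prop :=
  ContDiffOn ℝ 2 u s ∧ ∀ z ∈ s, lap2 u z = 0

/-- The normal derivative on the line `{x₂ = 0}`: upward derivative computed from below. -/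
def nuDeriv (u : ℂ → ℝ) (x : ℝ) : ℝ :=
  derivWithin (fun y : ℝ => u (x + y * Complex.I)) (Set.Iio 0) 0

namespace ClassAux
open Complex Set Filter Topology
lemma hasDerivAt_line (z v : ℂ) (t : ℝ) :
    HasDerivAt (fun s : ℝ => z + (s : ℂ) * v) v t := by
  have h := (Complex.ofRealCLM.hasDerivAt (x := t)).mul_const v
  simpa using h.const_add z

lemma line_iteratedDeriv (u : ℂ → ℝ) {U : Set ℂ} (hU : IsOpen U)
    (hu : ContDiffOn ℝ 2 u U) {z : ℂ} (hz : z ∈ U) (v : ℂ) :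
    iteratedDeriv 2 (fun t : ℝ => u (z + (t : ℂ) * v)) 0
      = fderiv ℝ (fderiv ℝ u) z v v := by
  have hdiff : ∀ w ∈ U, DifferentiableAt ℝ u w := fun w hw =>
    (hu.contDiffAt (hU.mem_nhds hw)).differentiableAt (by norm_num)
  have hc : Continuous fun t : ℝ => z + (t : ℂ) * v := by continuity
  have hmem : ∀ᶠ t : ℝ in 𝓝 0, z + (t : ℂ) * v ∈ U := by
    have := hc.continuousAt (x := 0) |>.preimage_mem_nhds (hU.mem_nhds (by simpa using hz))
    exact this
  have hderiv : (deriv fun s : ℝ => u (z + (s:ℂ)*v)) =ᶠ[𝓝 (0:ℝ)]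
      fun t : ℝ => fderiv ℝ u (z + (t:ℂ)*v) v := by
    filter_upwards [hmem] with t ht
    exact (((hdiff _ ht).hasFDerivAt).comp_hasDerivAt t (hasDerivAt_line z v t)).deriv
  have h0 : z = z + ((0:ℝ):ℂ) * v := by simp
  have h1 : DifferentiableAt ℝ (fderiv ℝ u) z :=
    ((hu.contDiffAt (hU.mem_nhds hz)).fderiv_right (m := 1) (by norm_num)).differentiableAt one_ne_zero
  rw [h0] at h1
  have h2 := h1.hasFDerivAt.comp_hasDerivAt 0 (hasDerivAt_line z v 0)
  have h3 := h2.clm_apply (hasDerivAt_const (0:ℝ) v)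
  rw [show (2:ℕ) = 1 + 1 from rfl, iteratedDeriv_succ, iteratedDeriv_one,
    Filter.EventuallyEq.deriv_eq hderiv]
  have := h3.deriv
  simp only [Function.comp] at this
  rw [this]
  simp

lemma hasDerivAt_dil (z : ℂ) (t : ℝ) :
    HasDerivAt (fun l : ℝ => ((l:ℂ) * z)) z t := by
  simpa using (Complex.ofRealCLM.hasDerivAt (x := t)).mul_const z

lemma euler1 {κ : ℝ} {u₀ : ℂ → ℝ}
    (hhom : ∀ l : ℝ, 0 < l → ∀ z : ℂ, u₀ ((l : ℂ) * z) = l ^ κ * u₀ z)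
    (hu : ContDiffOn ℝ 2 u₀ {z : ℂ | 0 < z.im}) {z : ℂ} (hz : 0 < z.im) :
    fderiv ℝ u₀ z z = κ * u₀ z := by
  have hU : IsOpen {z : ℂ | 0 < z.im} := isOpen_lt continuous_const Complex.continuous_im
  have hdiff : DifferentiableAt ℝ u₀ z :=
    (hu.contDiffAt (hU.mem_nhds hz)).differentiableAt (by norm_num)
  have h0 : z = ((1:ℝ):ℂ) * z := by simp
  rw [h0] at hdiff
  have h1 := hdiff.hasFDerivAt.comp_hasDerivAt 1 (hasDerivAt_dil z 1)
  have h2 : HasDerivAt (fun l : ℝ => l ^ κ * u₀ z) (κ * u₀ z) 1 := by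
    simpa using (Real.hasDerivAt_rpow_const (x := (1:ℝ)) (p := κ)
      (Or.inl one_ne_zero)).mul_const (u₀ z)
  have heq : (fun l : ℝ => u₀ ((l:ℂ) * z)) =ᶠ[𝓝 (1:ℝ)] fun l : ℝ => l ^ κ * u₀ z := by
    filter_upwards [Ioi_mem_nhds zero_lt_one] with l hl
    exact hhom l hl z
  have := h1.unique (h2.congr_of_eventuallyEq heq)
  simpa using this

lemma euler2 {κ : ℝ} {u₀ : ℂ → ℝ}
    (hhom : ∀ l : ℝ, 0 < l → ∀ z : ℂ, u₀ ((l : ℂ) * z) = l ^ κ * u₀ z)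
    (hu : ContDiffOn ℝ 2 u₀ {z : ℂ | 0 < z.im}) {z : ℂ} (hz : 0 < z.im) :
    fderiv ℝ (fderiv ℝ u₀) z z z = κ * (κ - 1) * u₀ z := by
  have hU : IsOpen {z : ℂ | 0 < z.im} := isOpen_lt continuous_const Complex.continuous_im
  have hψ : ∀ l : ℝ, 0 < l → fderiv ℝ u₀ ((l:ℂ) * z) z = κ * l ^ (κ - 1) * u₀ z := by
    intro l hl
    have him : 0 < ((l:ℂ) * z).im := by
      simp only [Complex.mul_im, Complex.ofReal_re, Complex.ofReal_im, zero_mul, add_zero]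
      exact mul_pos hl hz
    have he := euler1 hhom hu him
    have hval := hhom l hl z
    have hmap := (fderiv ℝ u₀ ((l:ℂ)*z)).map_smul l z
    rw [Complex.real_smul, smul_eq_mul] at hmap
    rw [hmap, hval] at he
    have hl0 : l ≠ 0 := hl.ne'
    have hp : l ^ (κ - 1) = l ^ κ / l := by
      rw [Real.rpow_sub hl, Real.rpow_one]
    rw [hp]
    field_simp
    linarith [he]
  have hd1 : DifferentiableAt ℝ (fderiv ℝ u₀) z :=
    ((hu.contDiffAt (hU.mem_nhds hz)).fderiv_right (m := 1) (by norm_num)).differentiableAt one_ne_zero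
  have h0 : z = ((1:ℝ):ℂ) * z := by simp
  nth_rewrite 1 [h0] at hd1
  have h2 := hd1.hasFDerivAt.comp_hasDerivAt 1 (hasDerivAt_dil z 1)
  have h3 := h2.clm_apply (hasDerivAt_const (1:ℝ) z)
  have h1 : HasDerivAt (fun l : ℝ => fderiv ℝ u₀ ((l:ℂ)*z) z)
      (fderiv ℝ (fderiv ℝ u₀) z z z) 1 := by simpa using h3
  have h4 : HasDerivAt (fun l : ℝ => κ * l ^ (κ-1) * u₀ z) (κ * (κ-1) * u₀ z) 1 := by
    have := ((Real.hasDerivAt_rpow_const (x := (1:ℝ)) (p := κ - 1)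
      (Or.inl one_ne_zero)).const_mul κ).mul_const (u₀ z)
    simpa using this
  have heq : (fun l : ℝ => fderiv ℝ u₀ ((l:ℂ)*z) z) =ᶠ[𝓝 (1:ℝ)]
      fun l : ℝ => κ * l ^ (κ-1) * u₀ z := by
    filter_upwards [Ioi_mem_nhds zero_lt_one] with l hl
    exact hψ l hl
  exact h1.unique (h4.congr_of_eventuallyEq heq)

lemma clm2_expand (M : ℂ →L[ℝ] ℂ →L[ℝ] ℝ) (v w : ℂ) :
    M v w = v.re * w.re * M 1 1 + v.re * w.im * M 1 I + v.im * w.re * M I 1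
      + v.im * w.im * M I I := by
  have hv : v = v.re • (1:ℂ) + v.im • I := by
    simp [Complex.real_smul, Complex.re_add_im]
  have hw : w = w.re • (1:ℂ) + w.im • I := by
    simp [Complex.real_smul, Complex.re_add_im]
  conv_lhs => rw [hv, hw]
  simp only [map_add, map_smul, ContinuousLinearMap.add_apply,
    ContinuousLinearMap.smul_apply, smul_eq_mul]
  ring

lemma rot_identity (M : ℂ →L[ℝ] ℂ →L[ℝ] ℝ) (z : ℂ) :
    M (z*I) (z*I) = (z.re^2 + z.im^2) * (M 1 1 + M I I) - M z z := by
  rw [clm2_expand M (z*I) (z*I), clm2_expand M z z]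
  simp only [Complex.mul_I_re, Complex.mul_I_im]
  ring

lemma hasDerivAt_circ (θ : ℝ) :
    HasDerivAt (fun θ : ℝ => Complex.exp ((θ:ℂ) * Complex.I))
      (Complex.exp ((θ:ℂ) * Complex.I) * Complex.I) θ := by
  have h1 : HasDerivAt (fun θ : ℝ => ((θ:ℂ) * Complex.I)) Complex.I θ := by
    simpa using (Complex.ofRealCLM.hasDerivAt (x := θ)).mul_const Complex.I
  simpa using h1.cexp

lemma lap2_repr {u : ℂ → ℝ} {U : Set ℂ} (hU : IsOpen U)
    (hu : ContDiffOn ℝ 2 u U) {z : ℂ} (hz : z ∈ U) :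
    lap2 u z = fderiv ℝ (fderiv ℝ u) z 1 1 + fderiv ℝ (fderiv ℝ u) z I I := by
  have h1 : (fun t : ℝ => u (z + (t:ℂ))) = fun t : ℝ => u (z + (t:ℂ) * 1) := by
    simp
  unfold lap2
  rw [h1, line_iteratedDeriv u hU hu hz 1, line_iteratedDeriv u hU hu hz I]

lemma angular {κ : ℝ} {u₀ : ℂ → ℝ} (hκ : 0 < κ)
    (hhom : ∀ l : ℝ, 0 < l → ∀ z : ℂ, u₀ ((l : ℂ) * z) = l ^ κ * u₀ z)
    (hu : ContDiffOn ℝ 2 u₀ {z : ℂ | 0 < z.im})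
    (hlap : ∀ z ∈ {z : ℂ | 0 < z.im}, lap2 u₀ z = 0) :
    ∃ A B : ℝ, ∀ θ ∈ Ioo 0 π,
      u₀ (Complex.exp ((θ:ℂ) * I)) = A * Real.cos (κ*θ) + B * Real.sin (κ*θ) := by
  have hU : IsOpen {z : ℂ | 0 < z.im} := isOpen_lt continuous_const Complex.continuous_im
  set c : ℝ → ℂ := fun θ => Complex.exp ((θ:ℂ) * I) with hc
  set Φ : ℝ → ℝ := fun θ => u₀ (c θ) with hΦ
  set Φd : ℝ → ℝ := fun θ => fderiv ℝ u₀ (c θ) (c θ * I) with hΦd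
  have hmem : ∀ θ ∈ Ioo (0:ℝ) π, 0 < (c θ).im := by
    intro θ hθ
    have : (c θ).im = Real.sin θ := Complex.exp_ofReal_mul_I_im θ
    rw [this]
    exact Real.sin_pos_of_pos_of_lt_pi hθ.1 hθ.2
  have hΦ' : ∀ θ ∈ Ioo (0:ℝ) π, HasDerivAt Φ (Φd θ) θ := by
    intro θ hθ
    have hdiff : DifferentiableAt ℝ u₀ (c θ) :=
      (hu.contDiffAt (hU.mem_nhds (hmem θ hθ))).differentiableAt (by norm_num)
    exact hdiff.hasFDerivAt.comp_hasDerivAt θ (hasDerivAt_circ θ)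
  have hΦ'' : ∀ θ ∈ Ioo (0:ℝ) π, HasDerivAt Φd (-(κ^2) * Φ θ) θ := by
    intro θ hθ
    have hz := hmem θ hθ
    have hd1 : DifferentiableAt ℝ (fderiv ℝ u₀) (c θ) :=
      ((hu.contDiffAt (hU.mem_nhds hz)).fderiv_right (m := 1)
        (by norm_num)).differentiableAt one_ne_zero
    have hL := hd1.hasFDerivAt.comp_hasDerivAt θ (hasDerivAt_circ θ)
    have hV : HasDerivAt (fun θ : ℝ => c θ * I) (c θ * I * I) θ :=
      (hasDerivAt_circ θ).mul_const I
    have h3 := hL.clm_apply hV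
    set M := fderiv ℝ (fderiv ℝ u₀) (c θ) with hM
    have hII : c θ * I * I = -(c θ) := by
      rw [mul_assoc, Complex.I_mul_I, mul_neg_one]
    have hval : M (c θ * I) (c θ * I) + fderiv ℝ u₀ (c θ) (c θ * I * I)
        = -(κ^2) * Φ θ := by
      rw [hII, map_neg, rot_identity M (c θ)]
      have habs : (c θ).re^2 + (c θ).im^2 = 1 := by
        rw [Complex.exp_ofReal_mul_I_re, Complex.exp_ofReal_mul_I_im]
        exact Real.cos_sq_add_sin_sq θ
      have hlapz : M 1 1 + M I I = 0 := by
        rw [hM, ← lap2_repr hU hu hz]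
        exact hlap _ hz
      have he2 : M (c θ) (c θ) = κ * (κ - 1) * u₀ (c θ) := euler2 hhom hu hz
      have he1 : fderiv ℝ u₀ (c θ) (c θ) = κ * u₀ (c θ) := euler1 hhom hu hz
      rw [habs, hlapz, he2, he1]
      simp only [hΦ]
      ring
    rw [← hval]
    exact h3
  -- ODE uniqueness
  have hpi2 : (π/2 : ℝ) ∈ Ioo (0:ℝ) π := ⟨by positivity, by linarith [pi_pos]⟩
  set θ₀ : ℝ := π/2 with hθ₀
  set A : ℝ := Φ θ₀ * Real.cos (κ*θ₀) - (Φd θ₀/κ) * Real.sin (κ*θ₀) with hA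
  set B : ℝ := Φ θ₀ * Real.sin (κ*θ₀) + (Φd θ₀/κ) * Real.cos (κ*θ₀) with hB
  set g : ℝ → ℝ := fun θ => Φ θ - (A * Real.cos (κ*θ) + B * Real.sin (κ*θ)) with hg
  set gd : ℝ → ℝ := fun θ => Φd θ - (-(A*κ) * Real.sin (κ*θ) + B*κ * Real.cos (κ*θ)) with hgd
  have hcos : ∀ θ : ℝ, HasDerivAt (fun x : ℝ => Real.cos (κ*x)) (-(Real.sin (κ*θ)) * κ) θ := by
    intro θ
    have := ((hasDerivAt_id θ).const_mul κ).cos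
    simpa using this
  have hsin : ∀ θ : ℝ, HasDerivAt (fun x : ℝ => Real.sin (κ*x)) (Real.cos (κ*θ) * κ) θ := by
    intro θ
    have := ((hasDerivAt_id θ).const_mul κ).sin
    simpa using this
  have hg' : ∀ θ ∈ Ioo (0:ℝ) π, HasDerivAt g (gd θ) θ := by
    intro θ hθ
    have := (hΦ' θ hθ).sub (((hcos θ).const_mul A).add ((hsin θ).const_mul B))
    refine this.congr_deriv ?_
    simp only [hgd]
    ring
  have hgd' : ∀ θ ∈ Ioo (0:ℝ) π, HasDerivAt gd (-(κ^2) * g θ) θ := by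
    intro θ hθ
    have := (hΦ'' θ hθ).sub (((hsin θ).const_mul (-(A*κ))).add ((hcos θ).const_mul (B*κ)))
    refine this.congr_deriv ?_
    simp only [hg]
    ring
  set E : ℝ → ℝ := fun θ => gd θ^2 + κ^2 * g θ^2 with hE
  have hE' : ∀ θ ∈ Ioo (0:ℝ) π, HasDerivAt E 0 θ := by
    intro θ hθ
    have := ((hgd' θ hθ).pow 2).add (((hg' θ hθ).pow 2).const_mul (κ^2))
    refine this.congr_deriv ?_
    ring
  have hgθ₀ : g θ₀ = 0 := by
    have htrig := Real.sin_sq_add_cos_sq (κ*θ₀)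
    simp only [hg, hA, hB]
    linear_combination (-(Φ θ₀)) * htrig
  have hgdθ₀ : gd θ₀ = 0 := by
    have htrig := Real.sin_sq_add_cos_sq (κ*θ₀)
    simp only [hgd, hA, hB]
    have hκ0 : κ ≠ 0 := hκ.ne'
    field_simp
    linear_combination (-(Φd θ₀)) * htrig
  have hE0 : E θ₀ = 0 := by
    simp [hE, hgθ₀, hgdθ₀]
  have hEzero : ∀ θ ∈ Ioo (0:ℝ) π, E θ = 0 := by
    intro θ hθ
    rcases lt_trichotomy θ θ₀ with hlt | heq | hgt
    · have hsub : Icc θ θ₀ ⊆ Ioo (0:ℝ) π := fun x hx => ⟨lt_of_lt_of_le hθ.1 hx.1,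
        lt_of_le_of_lt hx.2 hpi2.2⟩
      have hcontE : ContinuousOn E (Icc θ θ₀) := fun x hx =>
        (hE' x (hsub hx)).continuousAt.continuousWithinAt
      obtain ⟨cc, hcc, hslope⟩ := exists_hasDerivAt_eq_slope E (fun _ => 0) hlt hcontE
        (fun x hx => hE' x (hsub ⟨le_of_lt hx.1, le_of_lt hx.2⟩))
      have h9 : E θ₀ - E θ = 0 := by
        have h8 := hslope.symm
        rw [div_eq_zero_iff] at h8
        rcases h8 with h8 | h8
        · linarith
        · exfalso; linarith
      linarith [hE0]
    · rw [heq]; exact hE0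
    · have hsub : Icc θ₀ θ ⊆ Ioo (0:ℝ) π := fun x hx => ⟨lt_of_lt_of_le hpi2.1 hx.1,
        lt_of_le_of_lt hx.2 hθ.2⟩
      have hcontE : ContinuousOn E (Icc θ₀ θ) := fun x hx =>
        (hE' x (hsub hx)).continuousAt.continuousWithinAt
      obtain ⟨cc, hcc, hslope⟩ := exists_hasDerivAt_eq_slope E (fun _ => 0) hgt hcontE
        (fun x hx => hE' x (hsub ⟨le_of_lt hx.1, le_of_lt hx.2⟩))
      have h9 : E θ - E θ₀ = 0 := by
        have h8 := hslope.symm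
        rw [div_eq_zero_iff] at h8
        rcases h8 with h8 | h8
        · linarith
        · exfalso; linarith
      linarith [hE0]
  refine ⟨A, B, fun θ hθ => ?_⟩
  have hEθ := hEzero θ hθ
  simp only [hE] at hEθ
  have hk2 : 0 < κ^2 := by positivity
  have hg2 : g θ ^ 2 = 0 := by
    have hle : g θ ^ 2 ≤ 0 := by nlinarith [sq_nonneg (gd θ)]
    exact le_antisymm hle (sq_nonneg _)
  have hgz : g θ = 0 := (pow_eq_zero_iff (by norm_num : (2:ℕ) ≠ 0)).mp hg2
  have h10 : Φ θ - (A * Real.cos (κ*θ) + B * Real.sin (κ*θ)) = 0 := hgz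
  simp only [hΦ] at h10
  linarith [h10]
lemma nuDeriv_eq {u₀ : ℂ → ℝ} (x : ℝ) (G : ℝ → ℝ) (d : ℝ)
    (hagree : ∀ y : ℝ, y < 0 → u₀ ((x:ℂ) + (y:ℂ) * I) = G y)
    (h0 : u₀ ((x:ℂ)) = G 0)
    (hG : HasDerivAt G d 0) : nuDeriv u₀ x = d := by
  unfold nuDeriv
  have h1 : HasDerivWithinAt (fun y : ℝ => u₀ ((x:ℂ) + (y:ℂ) * I)) d (Iio 0) 0 := by
    refine (hG.hasDerivWithinAt).congr (fun y hy => hagree y hy) ?_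
    simpa using h0
  exact h1.derivWithin (uniqueDiffWithinAt_Iio 0)

lemma sqrt_cos_arctan (y : ℝ) :
    Real.sqrt (1+y^2) * Real.cos (Real.arctan (-y)) = 1 := by
  have hs : Real.sqrt (1+y^2) ≠ 0 := by positivity
  rw [Real.cos_arctan, neg_sq]
  field_simp

lemma sqrt_sin_arctan (y : ℝ) :
    Real.sqrt (1+y^2) * Real.sin (Real.arctan (-y)) = -y := by
  have hs : Real.sqrt (1+y^2) ≠ 0 := by positivity
  rw [Real.sin_arctan, neg_sq]
  field_simp

lemma expand_polar (r θ : ℝ) :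
    ((r : ℝ) : ℂ) * Complex.exp (((θ : ℝ) : ℂ) * I) =
      ((r * Real.cos θ : ℝ) : ℂ) + ((r * Real.sin θ : ℝ) : ℂ) * I := by
  rw [Complex.exp_mul_I, ← Complex.ofReal_cos, ← Complex.ofReal_sin]
  push_cast
  ring

lemma polar_pt (y : ℝ) :
    (1:ℂ) - (y:ℂ) * I = ((Real.sqrt (1+y^2) : ℝ) : ℂ) *
      Complex.exp (((Real.arctan (-y) : ℝ) : ℂ) * I) := by
  rw [expand_polar, sqrt_cos_arctan, sqrt_sin_arctan]
  push_cast
  ring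

lemma polar_pt_neg (y : ℝ) :
    (-1:ℂ) - (y:ℂ) * I = ((Real.sqrt (1+y^2) : ℝ) : ℂ) *
      Complex.exp (((π - Real.arctan (-y) : ℝ) : ℂ) * I) := by
  rw [expand_polar, Real.cos_pi_sub, Real.sin_pi_sub, mul_neg, sqrt_cos_arctan,
    sqrt_sin_arctan]
  push_cast
  ring

lemma Gderiv_aux :
    HasDerivAt (fun y : ℝ => Real.sqrt (1+y^2)) 0 0 ∧
    HasDerivAt (fun y : ℝ => Real.arctan (-y)) (-1) 0 := by
  constructor
  · have hinner : HasDerivAt (fun y : ℝ => 1+y^2) 0 0 := by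
      simpa using (hasDerivAt_pow 2 (0:ℝ)).const_add 1
    have := hinner.sqrt (by norm_num)
    simpa using this
  · have h1 := (Real.hasDerivAt_arctan (-(0:ℝ))).comp 0 ((hasDerivAt_id (0:ℝ)).neg)
    have h2 : HasDerivAt (fun y : ℝ => Real.arctan (-y)) (1 / (1 + (-(0:ℝ)) ^ 2) * -1) 0 := h1
    convert h2 using 1
    norm_num

lemma Grpow (κ : ℝ) : HasDerivAt (fun y : ℝ => Real.sqrt (1+y^2) ^ κ) 0 0 := by
  have hsqrt0 : Real.sqrt (1+(0:ℝ)^2) = 1 := by norm_num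
  have := Gderiv_aux.1.rpow_const (p := κ) (Or.inl (by rw [hsqrt0]; exact one_ne_zero))
  simpa using this

lemma Gderiv1 (κ A B : ℝ) :
    HasDerivAt (fun y : ℝ => Real.sqrt (1+y^2) ^ κ *
      (A * Real.cos (κ * Real.arctan (-y)) + B * Real.sin (κ * Real.arctan (-y))))
      (-(B*κ)) 0 := by
  have harct := Gderiv_aux.2
  have hco : HasDerivAt (fun y : ℝ => Real.cos (κ * Real.arctan (-y))) 0 0 := by
    have := (harct.const_mul κ).cos
    simpa using this
  have hsi : HasDerivAt (fun y : ℝ => Real.sin (κ * Real.arctan (-y))) (-κ) 0 := by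
    have := (harct.const_mul κ).sin
    simpa using this
  have hsum := (hco.const_mul A).add (hsi.const_mul B)
  have := (Grpow κ).mul hsum
  refine this.congr_deriv ?_
  norm_num

lemma Gderiv2 (κ A : ℝ) :
    HasDerivAt (fun y : ℝ => Real.sqrt (1+y^2) ^ κ *
      (A * Real.cos (κ * (π - Real.arctan (-y)))))
      (-(A * κ * Real.sin (κ*π))) 0 := by
  have harct := Gderiv_aux.2
  have hang : HasDerivAt (fun y : ℝ => π - Real.arctan (-y)) 1 0 := by
    have := harct.const_sub π
    simpa using this
  have hco2 : HasDerivAt (fun y : ℝ => Real.cos (κ * (π - Real.arctan (-y))))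
      (-(Real.sin (κ*π)) * κ) 0 := by
    have := (hang.const_mul κ).cos
    simpa using this
  have := (Grpow κ).mul (hco2.const_mul A)
  refine this.congr_deriv ?_
  norm_num
  ring

lemma cos_nat_mul_pi (m : ℕ) : Real.cos ((m:ℝ)*π) = (-1:ℝ)^m := by
  induction m with
  | zero => simp
  | succ p ih =>
    have : ((p:ℝ)+1)*π = (p:ℝ)*π + π := by ring
    push_cast
    rw [this, Real.cos_add_pi, ih, pow_succ]
    ring
end ClassAux

/-- classification of homogeneous blowups in 2D: a nonzero continuous
function `u₀ : ℝ² → ℝ`, homogeneous of degree `κ > 0`, symmetric in `{x₂ = 0}`, harmonic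
in the open upper and lower half-planes, satisfying the Signorini conditions
`u₀ ≥ 0`, `∂_ν u₀ ≥ 0`, `u₀ ∂_ν u₀ = 0` on `{x₁ < 0}` and `∂_ν u₀ = 0` on `{x₁ > 0}`,
must equal `b r^κ cos(κθ)` with `b ≠ 0`, where either `κ ∈ {2m, 2m + 3/2}` and `b > 0`,
or `κ ∈ {2m + 1, 2m + 1/2}` and `b < 0`; in particular `κ ∈ ½ℕ`. -/
theorem classification_of_blowups (κ : ℝ) (hκ : 0 < κ) (u₀ : ℂ → ℝ)
    (hcont : Continuous u₀)
    (hhom : ∀ l : ℝ, 0 < l → ∀ z : ℂ, u₀ ((l : ℂ) * z) = l ^ κ * u₀ z)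
    (hsym : ∀ z : ℂ, u₀ ((starRingEnd ℂ) z) = u₀ z)
    (hup : HarmonicOn2 u₀ {z : ℂ | 0 < z.im})
    (hlow : HarmonicOn2 u₀ {z : ℂ | z.im < 0})
    (hsig : ∀ x : ℝ, x < 0 →
      0 ≤ u₀ (x : ℂ) ∧ 0 ≤ nuDeriv u₀ x ∧ u₀ (x : ℂ) * nuDeriv u₀ x = 0)
    (hneu : ∀ x : ℝ, 0 < x → nuDeriv u₀ x = 0)
    (hne : ∃ z : ℂ, u₀ z ≠ 0) :
    ∃ b : ℝ, b ≠ 0 ∧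
      (∀ z : ℂ, z ≠ 0 → u₀ z = b * ‖z‖ ^ κ * Real.cos (κ * Complex.arg z)) ∧
      (((∃ m : ℕ, κ = 2 * m ∨ κ = 2 * m + 3/2) ∧ 0 < b) ∨
        ((∃ m : ℕ, κ = 2 * m + 1 ∨ κ = 2 * m + 1/2) ∧ b < 0)) ∧
      ∃ k : ℕ, κ = k / 2 := by
  classical
  obtain ⟨A, B, hAB⟩ := ClassAux.angular hκ hhom hup.1 hup.2
  have hray : ∀ l θ : ℝ, 0 < l → θ ∈ Set.Ioo (0:ℝ) π →
      u₀ ((l:ℂ) * Complex.exp ((θ:ℂ) * Complex.I)) =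
        l ^ κ * (A * Real.cos (κ*θ) + B * Real.sin (κ*θ)) := by
    intro l θ hl hθ
    rw [hhom l hl _, hAB θ hθ]
  have hΦc : Continuous (fun θ : ℝ => u₀ (Complex.exp ((θ:ℂ) * Complex.I))) :=
    hcont.comp (Complex.continuous_exp.comp (Complex.continuous_ofReal.mul continuous_const))
  have htrigc : Continuous (fun θ : ℝ => A * Real.cos (κ*θ) + B * Real.sin (κ*θ)) := by
    fun_prop
  have hu1 : u₀ 1 = A := by
    have h1 : Filter.Tendsto (fun θ : ℝ => u₀ (Complex.exp ((θ:ℂ) * Complex.I)))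
        (nhdsWithin 0 (Set.Ioi 0)) (nhds (u₀ 1)) := by
      have h0 := (hΦc.tendsto 0).mono_left (nhdsWithin_le_nhds (s := Set.Ioi (0:ℝ)))
      simpa using h0
    have h2 : Filter.Tendsto (fun θ : ℝ => A * Real.cos (κ*θ) + B * Real.sin (κ*θ))
        (nhdsWithin 0 (Set.Ioi 0)) (nhds A) := by
      have h0 := (htrigc.tendsto 0).mono_left (nhdsWithin_le_nhds (s := Set.Ioi (0:ℝ)))
      simpa using h0
    have heq : (fun θ : ℝ => u₀ (Complex.exp ((θ:ℂ) * Complex.I)))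
        =ᶠ[nhdsWithin 0 (Set.Ioi 0)]
        (fun θ : ℝ => A * Real.cos (κ*θ) + B * Real.sin (κ*θ)) := by
      filter_upwards [Ioo_mem_nhdsGT_of_mem (Set.left_mem_Ico.mpr Real.pi_pos)] with θ hθ
      exact hAB θ hθ
    exact tendsto_nhds_unique (h1.congr' heq) h2
  have hum1 : u₀ (-1) = A * Real.cos (κ*π) + B * Real.sin (κ*π) := by
    have h1 : Filter.Tendsto (fun θ : ℝ => u₀ (Complex.exp ((θ:ℂ) * Complex.I)))
        (nhdsWithin π (Set.Iio π)) (nhds (u₀ (-1))) := by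
      have h0 := (hΦc.tendsto π).mono_left (nhdsWithin_le_nhds (s := Set.Iio π))
      simpa [Complex.exp_pi_mul_I] using h0
    have h2 := (htrigc.tendsto π).mono_left (nhdsWithin_le_nhds (s := Set.Iio π))
    have heq : (fun θ : ℝ => u₀ (Complex.exp ((θ:ℂ) * Complex.I)))
        =ᶠ[nhdsWithin π (Set.Iio π)]
        (fun θ : ℝ => A * Real.cos (κ*θ) + B * Real.sin (κ*θ)) := by
      filter_upwards [Ioo_mem_nhdsLT_of_mem (Set.right_mem_Ioc.mpr Real.pi_pos)] with θ hθ
      exact hAB θ hθ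
    exact tendsto_nhds_unique (h1.congr' heq) h2
  have hs1 : ∀ y : ℝ, u₀ (((1:ℝ):ℂ) + (y:ℂ) * Complex.I) = u₀ (1 - (y:ℂ)*Complex.I) := by
    intro y
    have h := hsym (1 - (y:ℂ)*Complex.I)
    have hc : (starRingEnd ℂ) (1 - (y:ℂ)*Complex.I) = ((1:ℝ):ℂ) + (y:ℂ)*Complex.I := by
      simp [map_sub, map_mul, Complex.conj_ofReal, Complex.conj_I]
    rw [hc] at h
    exact h
  have hsm1 : ∀ y : ℝ, u₀ ((((-1):ℝ):ℂ) + (y:ℂ) * Complex.I) = u₀ (-1 - (y:ℂ)*Complex.I) := by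
    intro y
    have h := hsym (-1 - (y:ℂ)*Complex.I)
    have hc : (starRingEnd ℂ) (-1 - (y:ℂ)*Complex.I) = (((-1):ℝ):ℂ) + (y:ℂ)*Complex.I := by
      simp [map_sub, map_mul, Complex.conj_ofReal, Complex.conj_I]
    rw [hc] at h
    exact h
  have harcIoo : ∀ y : ℝ, y < 0 → Real.arctan (-y) ∈ Set.Ioo (0:ℝ) π := by
    intro y hy
    constructor
    · rw [← Real.arctan_zero]
      exact Real.arctan_strictMono (by linarith)
    · exact lt_trans (Real.arctan_lt_pi_div_two _) (by linarith [Real.pi_pos])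
  have hBval : nuDeriv u₀ 1 = -(B*κ) := by
    apply ClassAux.nuDeriv_eq 1 (fun y : ℝ => Real.sqrt (1+y^2) ^ κ *
      (A * Real.cos (κ * Real.arctan (-y)) + B * Real.sin (κ * Real.arctan (-y))))
      (-(B*κ)) ?_ ?_ (ClassAux.Gderiv1 κ A B)
    · intro y hy
      rw [hs1 y, ClassAux.polar_pt y]
      exact hray _ _ (Real.sqrt_pos.mpr (by positivity)) (harcIoo y hy)
    · have h1 : Real.sqrt (1+(0:ℝ)^2) = 1 := by norm_num
      simp [h1, Real.one_rpow, Real.arctan_zero, Complex.ofReal_one, hu1]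
  have hB : B = 0 := by
    have h := hneu 1 one_pos
    rw [hBval] at h
    have h2 : B * κ = 0 := by linarith
    rcases mul_eq_zero.mp h2 with h' | h'
    · exact h'
    · exact absurd h' hκ.ne'
  have hrayA : ∀ l θ : ℝ, 0 < l → θ ∈ Set.Ioo (0:ℝ) π →
      u₀ ((l:ℂ) * Complex.exp ((θ:ℂ) * Complex.I)) = l ^ κ * (A * Real.cos (κ*θ)) := by
    intro l θ hl hθ
    rw [hray l θ hl hθ, hB]
    ring
  have humA : u₀ (-1) = A * Real.cos (κ*π) := by
    rw [hum1, hB]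
    ring
  have hnuval : nuDeriv u₀ (-1) = -(A * κ * Real.sin (κ*π)) := by
    apply ClassAux.nuDeriv_eq (-1) (fun y : ℝ => Real.sqrt (1+y^2) ^ κ *
      (A * Real.cos (κ * (π - Real.arctan (-y)))))
      (-(A * κ * Real.sin (κ*π))) ?_ ?_ (ClassAux.Gderiv2 κ A)
    · intro y hy
      rw [hsm1 y, ClassAux.polar_pt_neg y]
      have h1 := harcIoo y hy
      have harc : π - Real.arctan (-y) ∈ Set.Ioo (0:ℝ) π :=
        ⟨by linarith [h1.2, Real.arctan_lt_pi_div_two (-y), Real.pi_pos], by linarith [h1.1]⟩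
      exact hrayA _ _ (Real.sqrt_pos.mpr (by positivity)) harc
    · have h1 : Real.sqrt (1+(0:ℝ)^2) = 1 := by norm_num
      have h2 : (((-1):ℝ):ℂ) = (-1:ℂ) := by push_cast; ring
      simp [h1, Real.one_rpow, Real.arctan_zero, h2, humA]
  obtain ⟨hpos, hnupos, hprod⟩ := hsig (-1) (by norm_num)
  have hval1 : u₀ ((((-1):ℝ)):ℂ) = A * Real.cos (κ*π) := by
    rw [show ((((-1):ℝ)):ℂ) = (-1:ℂ) by push_cast; ring]
    exact humA
  rw [hval1, hnuval] at hprod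
  rw [hval1] at hpos
  rw [hnuval] at hnupos
  have hrep : ∀ z : ℂ, 0 < z.im →
      u₀ z = ‖z‖ ^ κ * (A * Real.cos (κ * Complex.arg z)) := by
    intro z hz
    have hz0 : z ≠ 0 := fun h => by rw [h] at hz; simp at hz
    have habs : 0 < ‖z‖ := norm_pos_iff.mpr hz0
    have harg : Complex.arg z ∈ Set.Ioo (0:ℝ) π := by
      constructor
      · by_contra hle
        push_neg at hle
        have hsin : Real.sin (Complex.arg z) ≤ 0 :=
          Real.sin_nonpos_of_nonpos_of_neg_pi_le hle (Complex.neg_pi_lt_arg z).le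
        rw [Complex.sin_arg] at hsin
        have hq : 0 < z.im / ‖z‖ := div_pos hz habs
        linarith
      · refine lt_of_le_of_ne (Complex.arg_le_pi z) (fun h => ?_)
        exact hz.ne' (Complex.arg_eq_pi_iff.mp h).2
    calc u₀ z = u₀ (((‖z‖ : ℝ):ℂ) *
          Complex.exp (((Complex.arg z : ℝ):ℂ) * Complex.I)) := by
          rw [Complex.norm_mul_exp_arg_mul_I]
      _ = ‖z‖ ^ κ * (A * Real.cos (κ * Complex.arg z)) := hrayA _ _ habs harg
  have hfinal : ∀ z : ℂ, z ≠ 0 →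
      u₀ z = A * ‖z‖ ^ κ * Real.cos (κ * Complex.arg z) := by
    intro z hz0
    rcases lt_trichotomy z.im 0 with him | him | him
    · have hcz : 0 < ((starRingEnd ℂ) z).im := by
        rw [Complex.conj_im]; linarith
      have h1 := hsym z
      have h2 := hrep _ hcz
      rw [h1] at h2
      have hargne : Complex.arg z ≠ π := fun h =>
        absurd (Complex.arg_eq_pi_iff.mp h).2 him.ne
      rw [h2, Complex.norm_conj, Complex.arg_conj]
      simp only [hargne, if_false, mul_neg, Real.cos_neg]
      ring
    · have hzre : z = ((z.re : ℝ):ℂ) := by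
        apply Complex.ext <;> simp [him]
      rcases lt_trichotomy z.re 0 with hx | hx | hx
      · have h2 := hhom (-z.re) (by linarith) (-1)
        have h3 : (((-z.re : ℝ)):ℂ) * (-1) = z := by
          conv_rhs => rw [hzre]
          push_cast
          ring
        rw [h3] at h2
        have harg : Complex.arg z = π := by
          rw [hzre]; exact Complex.arg_ofReal_of_neg hx
        have habsz : ‖z‖ = -z.re := by
          rw [hzre]; simp [Complex.norm_real, Real.norm_eq_abs, abs_of_neg hx]
        rw [h2, humA, harg, habsz]
        ring
      · exact absurd (by apply Complex.ext <;> simp [him, hx]) hz0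
      · have h2 := hhom z.re hx 1
        have h3 : ((z.re : ℝ):ℂ) * 1 = z := by
          conv_rhs => rw [hzre]
          ring
        rw [h3] at h2
        have harg : Complex.arg z = 0 := by
          rw [hzre]; exact Complex.arg_ofReal_of_nonneg hx.le
        have habsz : ‖z‖ = z.re := by
          rw [hzre]; simp [Complex.norm_real, Real.norm_eq_abs, abs_of_pos hx]
        rw [h2, hu1, harg, habsz]
        simp
        ring
    · rw [hrep z him]; ring
  have hA0 : A ≠ 0 := by
    intro h0
    obtain ⟨z, hz⟩ := hne
    apply hz
    rcases eq_or_ne z 0 with rfl | hzne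
    · have h2 := hhom 2 (by norm_num) 0
      rw [mul_zero] at h2
      have h3 : (1:ℝ) < (2:ℝ) ^ κ :=
        (Real.one_lt_rpow_iff_of_pos (by norm_num)).mpr (Or.inl ⟨one_lt_two, hκ⟩)
      have h4 : u₀ 0 * (1 - (2:ℝ)^κ) = 0 := by linear_combination h2
      rcases mul_eq_zero.mp h4 with h | h
      · exact h
      · exfalso; linarith
    · rw [hfinal z hzne, h0]; ring
  have h5 : Real.sin (κ*π) * Real.cos (κ*π) = 0 := by
    have h4 : (A*A*κ) * (Real.sin (κ*π) * Real.cos (κ*π)) = 0 := by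
      linear_combination -hprod
    rcases mul_eq_zero.mp h4 with h | h
    · exact absurd h (mul_ne_zero (mul_ne_zero hA0 hA0) hκ.ne')
    · exact h
  rcases mul_eq_zero.mp h5 with hs0 | hc0
  · obtain ⟨n, hn⟩ := Real.sin_eq_zero_iff.mp hs0
    have hκn : κ = (n:ℝ) := (mul_right_cancel₀ Real.pi_ne_zero hn).symm
    have hnpos : 0 < n := by
      by_contra hle
      push_neg at hle
      have h8 : (n:ℝ) ≤ 0 := by exact_mod_cast hle
      linarith
    set m : ℕ := n.toNat with hmdef
    have hm' : (m : ℤ) = n := Int.toNat_of_nonneg hnpos.le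
    have hm : (m:ℝ) = κ := by
      rw [hκn]; exact_mod_cast hm'
    have hcosm : Real.cos (κ*π) = (-1:ℝ)^m := by
      rw [← hm]; exact ClassAux.cos_nat_mul_pi m
    rcases Nat.even_or_odd m with hev | hod
    · have hcos1 : Real.cos (κ*π) = 1 := by rw [hcosm]; exact Even.neg_one_pow hev
      have hApos : 0 < A := by
        rw [hcos1] at hpos
        have : 0 ≤ A := by linarith
        exact lt_of_le_of_ne this (Ne.symm hA0)
      obtain ⟨p, hp⟩ := hev
      refine ⟨A, hA0, hfinal, Or.inl ⟨⟨p, Or.inl ?_⟩, hApos⟩, ⟨2*m, ?_⟩⟩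
      · rw [← hm, hp]; push_cast; ring
      · rw [← hm]; push_cast; ring
    · have hcos1 : Real.cos (κ*π) = -1 := by rw [hcosm]; exact Odd.neg_one_pow hod
      have hAneg : A < 0 := by
        rw [hcos1] at hpos
        have : A ≤ 0 := by linarith
        exact lt_of_le_of_ne this hA0
      obtain ⟨p, hp⟩ := hod
      refine ⟨A, hA0, hfinal, Or.inr ⟨⟨p, Or.inl ?_⟩, hAneg⟩, ⟨2*m, ?_⟩⟩
      · rw [← hm, hp]; push_cast; ring
      · rw [← hm]; push_cast; ring
  · obtain ⟨n, hn⟩ := Real.cos_eq_zero_iff.mp hc0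
    have h6 : (κ*2) * π = (2*(n:ℝ)+1) * π := by linarith [hn]
    have h7 : κ*2 = 2*(n:ℝ)+1 := mul_right_cancel₀ Real.pi_ne_zero h6
    have hn0 : 0 ≤ n := by
      by_contra hneg
      push_neg at hneg
      have h8 : n ≤ -1 := by omega
      have h9 : (n:ℝ) ≤ -1 := by exact_mod_cast h8
      linarith
    set m : ℕ := n.toNat with hmdef
    have hm' : (m : ℤ) = n := Int.toNat_of_nonneg hn0
    have hmr : (m:ℝ) = (n:ℝ) := by exact_mod_cast hm'
    have hm : κ = (m:ℝ) + 1/2 := by rw [hmr]; linarith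
    have hsinm : Real.sin (κ*π) = (-1:ℝ)^m := by
      have h10 : κ*π = (m:ℝ)*π + π/2 := by rw [hm]; ring
      rw [h10, Real.sin_add_pi_div_two, ClassAux.cos_nat_mul_pi]
    rcases Nat.even_or_odd m with hev | hod
    · have hsin1 : Real.sin (κ*π) = 1 := by rw [hsinm]; exact Even.neg_one_pow hev
      rw [hsin1] at hnupos
      have hAneg : A < 0 := by
        have hle : A ≤ 0 := by nlinarith
        exact lt_of_le_of_ne hle hA0
      obtain ⟨p, hp⟩ := hev
      refine ⟨A, hA0, hfinal, Or.inr ⟨⟨p, Or.inr ?_⟩, hAneg⟩, ⟨2*m+1, ?_⟩⟩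
      · rw [hm, hp]; push_cast; ring
      · rw [hm]; push_cast; ring
    · have hsin1 : Real.sin (κ*π) = -1 := by rw [hsinm]; exact Odd.neg_one_pow hod
      rw [hsin1] at hnupos
      have hApos : 0 < A := by
        have hle : 0 ≤ A := by nlinarith
        exact lt_of_le_of_ne hle (Ne.symm hA0)
      obtain ⟨p, hp⟩ := hod
      refine ⟨A, hA0, hfinal, Or.inl ⟨⟨p, Or.inr ?_⟩, hApos⟩, ⟨2*m+1, ?_⟩⟩
      · rw [hm, hp]; push_cast; ring
      · rw [hm]; push_cast; ring
end
end
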